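/- arXiv:1705.01686 — 4 statements merged into one kernel-verified Lean document; each statement's English description precedes it below -/
import Mathlib

section
/- Every Bacon-Shor stabilizer commutes with every gauge operator: for all i ∈ (m), j ∈ (n), h ∈ (m), k ∈ [n), i' ∈ [m), j' ∈ (n), the operators Z̃_j and X̃_i commute with both X̄_{h,k} = X_{h-1,k}X_{h,k} and Z̄_{i',j'} = Z_{i',j'-1}Z_{i',j'}. -/
open Matrix

noncomputable section

variable (m n : ℕ)

/-- States of the m×n lattice of qubits. -/
abbrev BSLat (m n : ℕ) := Fin m × Fin n → Fin 2

/-- Pauli X on the single qubit (i,k). -/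
def Xs (i : Fin m) (k : Fin n) : Matrix (BSLat m n) (BSLat m n) ℂ :=
  Matrix.of fun x y => if y = Function.update x (i, k) (x (i, k) + 1) then 1 else 0

/-- Pauli Z on the single qubit (i,j). -/
def Zs (i : Fin m) (j : Fin n) : Matrix (BSLat m n) (BSLat m n) ℂ :=
  Matrix.of fun x y => if x = y then ((-1 : ℂ)) ^ ((x (i, j)).val) else 0

/-- X_{i,*}: Pauli X on every qubit of row i. -/
def Xrow (i : Fin m) : Matrix (BSLat m n) (BSLat m n) ℂ :=
  Matrix.of fun x y => if y = (fun p => if p.1 = i then x p + 1 else x p) then 1 else 0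

/-- Z_{*,j}: Pauli Z on every qubit of column j. -/
def Zcol (j : Fin n) : Matrix (BSLat m n) (BSLat m n) ℂ :=
  Matrix.of fun x y => if x = y then ((-1 : ℂ)) ^ (∑ i : Fin m, (x (i, j)).val) else 0

/-- Stabilizer Z̃_j = Z_{*,j-1}Z_{*,j}. -/
def Ztilde [NeZero n] (j : Fin n) : Matrix (BSLat m n) (BSLat m n) ℂ :=
  Zcol m n (j - 1) * Zcol m n j

/-- Stabilizer X̃_i = X_{i-1,*}X_{i,*}. -/
def Xtilde [NeZero m] (i : Fin m) : Matrix (BSLat m n) (BSLat m n) ℂ :=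
  Xrow m n (i - 1) * Xrow m n i

/-- Gauge operator X̄_{h,k} = X_{h-1,k}X_{h,k}. -/
def Xbar [NeZero m] (h : Fin m) (k : Fin n) : Matrix (BSLat m n) (BSLat m n) ℂ :=
  Xs m n (h - 1) k * Xs m n h k

/-- Gauge operator Z̄_{i,j} = Z_{i,j-1}Z_{i,j}. -/
def Zbar [NeZero n] (i : Fin m) (j : Fin n) : Matrix (BSLat m n) (BSLat m n) ℂ :=
  Zs m n i (j - 1) * Zs m n i j


section helpers
variable {α : Type*} [Fintype α] [DecidableEq α]

/-- Diagonal-type matrix. -/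
def Dg (f : α → ℂ) : Matrix α α ℂ := Matrix.of fun x y => if x = y then f x else 0
/-- Permutation-type matrix. -/
def Pg (σ : α → α) : Matrix α α ℂ := Matrix.of fun x y => if y = σ x then 1 else 0

lemma Dg_mul_Dg (f g : α → ℂ) : Dg f * Dg g = Dg fun x => f x * g x := by
  ext x y
  simp only [Dg, Matrix.mul_apply, Matrix.of_apply]
  rw [Finset.sum_eq_single x]
  · by_cases hxy : x = y <;> simp [hxy]
  · intro b _ hb; simp [Ne.symm hb]
  · simp

lemma Pg_mul_Pg (σ τ : α → α) : Pg σ * Pg τ = Pg (τ ∘ σ) := by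
  ext x y
  simp only [Pg, Matrix.mul_apply, Matrix.of_apply, Function.comp]
  rw [Finset.sum_eq_single (σ x)]
  · simp
  · intro b _ hb; simp [hb]
  · simp

lemma Dg_comm_Pg (f : α → ℂ) (σ : α → α) (h : ∀ x, f (σ x) = f x) :
    Dg f * Pg σ = Pg σ * Dg f := by
  ext x y
  simp only [Dg, Pg, Matrix.mul_apply, Matrix.of_apply, ite_mul, mul_ite, zero_mul, mul_zero,
    one_mul, mul_one]
  rw [Finset.sum_eq_single x, Finset.sum_eq_single (σ x)]
  · by_cases hy : y = σ x <;> simp [hy, h, eq_comm]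
  · intro b _ hb; simp [hb]
  · simp
  · intro b _ hb; simp [Ne.symm hb]
  · simp

lemma Dg_mul_comm (f g : α → ℂ) : Dg f * Dg g = Dg g * Dg f := by
  have e : (fun x => f x * g x) = fun x => g x * f x := funext fun x => mul_comm _ _
  rw [Dg_mul_Dg, Dg_mul_Dg, e]

lemma Pg_mul_comm (σ τ : α → α) (h : τ ∘ σ = σ ∘ τ) : Pg σ * Pg τ = Pg τ * Pg σ := by
  rw [Pg_mul_Pg, Pg_mul_Pg, h]

lemma sign_flip (v : Fin 2) : ((-1:ℂ)) ^ ((v + 1).val) = -((-1:ℂ)) ^ v.val := by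
  fin_cases v <;>
    norm_num [show ((1:Fin 2)+1) = 0 from rfl, show ((0:Fin 2)+1) = 1 from rfl]

end helpers

/-- canonical form of the pair-flip map used by Xbar -/
def flipPair (m n : ℕ) [NeZero m] (h : Fin m) (k : Fin n) : BSLat m n → BSLat m n :=
  fun x p => x p + (if p = (h - 1, k) then 1 else 0) + (if p = (h, k) then 1 else 0)

/-- canonical form of the double row-flip map used by Xtilde -/
def flipRows (m n : ℕ) [NeZero m] (i : Fin m) : BSLat m n → BSLat m n :=
  fun x p => x p + (if p.1 = i - 1 then 1 else 0) + (if p.1 = i then 1 else 0)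

/-- Every Bacon-Shor stabilizer commutes with every gauge operator. -/
theorem stabilizers_commute_with_gauge [NeZero m] [NeZero n] :
    ∀ (i : Fin m) (j : Fin n) (h : Fin m) (k : Fin n) (i' : Fin m) (j' : Fin n),
      1 ≤ i.val → 1 ≤ j.val → 1 ≤ h.val → 1 ≤ j'.val →
      (Ztilde m n j * Xbar m n h k = Xbar m n h k * Ztilde m n j) ∧
      (Ztilde m n j * Zbar m n i' j' = Zbar m n i' j' * Ztilde m n j) ∧
      (Xtilde m n i * Xbar m n h k = Xbar m n h k * Xtilde m n i) ∧
      (Xtilde m n i * Zbar m n i' j' = Zbar m n i' j' * Xtilde m n i) := by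
  intro i j h k i' j' hi hj hh hj'
  have hm2 : 2 ≤ m := by have := h.isLt; omega
  have hn2 : 2 ≤ n := by have := j.isLt; omega
  have hone_m : (1 : Fin m) ≠ 0 := by
    intro e
    have := congrArg Fin.val e
    rw [Fin.val_one', Fin.val_zero, Nat.mod_eq_of_lt (by omega)] at this
    omega
  have hone_n : (1 : Fin n) ≠ 0 := by
    intro e
    have := congrArg Fin.val e
    rw [Fin.val_one', Fin.val_zero, Nat.mod_eq_of_lt (by omega)] at this
    omega
  have h1m : h - 1 ≠ h := fun e => hone_m (by rwa [sub_eq_self] at e)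
  have i1m : i - 1 ≠ i := fun e => hone_m (by rwa [sub_eq_self] at e)
  have j1n : j - 1 ≠ j := fun e => hone_n (by rwa [sub_eq_self] at e)
  have j'1n : j' - 1 ≠ j' := fun e => hone_n (by rwa [sub_eq_self] at e)
  have hm1 : m ≠ 1 := by omega
  have hi1 : i ≠ -1 + i := by
    rw [neg_add_eq_sub]
    exact fun e => i1m e.symm
  -- Xbar as a Pg of the canonical pair flip
  have hcompP : ((fun x : BSLat m n => Function.update x (h, k) (x (h, k) + 1)) ∘
      (fun x : BSLat m n => Function.update x (h - 1, k) (x (h - 1, k) + 1))) =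
      flipPair m n h k := by
    funext x p
    simp only [Function.comp_apply, flipPair, Function.update_apply]
    have hpne : ((h : Fin m), k) ≠ ((h - 1 : Fin m), k) := by
      simp [Prod.ext_iff, Ne.symm h1m]
    by_cases h1 : p = (h, k)
    · subst h1
      simp [hpne, Ne.symm h1m, Prod.ext_iff, hm1]
    · by_cases h2 : p = (h - 1, k) <;> simp [h1, h2, hm1]
  have eXb : Xbar m n h k = Pg (flipPair m n h k) := by
    rw [show Xbar m n h k =
        Pg (fun x => Function.update x (h - 1, k) (x (h - 1, k) + 1)) *
        Pg (fun x => Function.update x (h, k) (x (h, k) + 1)) from rfl, Pg_mul_Pg, hcompP]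
  -- Xtilde as a Pg of the canonical double row flip
  have hcompR : ((fun x : BSLat m n => (fun p => if p.1 = i then x p + 1 else x p : BSLat m n)) ∘
      (fun x : BSLat m n => (fun p => if p.1 = i - 1 then x p + 1 else x p : BSLat m n))) =
      flipRows m n i := by
    funext x p
    show (if p.1 = i then (if p.1 = i - 1 then x p + 1 else x p) + 1
        else (if p.1 = i - 1 then x p + 1 else x p)) =
      x p + (if p.1 = i - 1 then 1 else 0) + (if p.1 = i then 1 else 0)
    by_cases h1 : p.1 = i - 1 <;> by_cases h2 : p.1 = i
    · exact absurd (h1.symm.trans h2) i1m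
    · rw [if_neg h2, if_pos h1, if_pos h1, if_neg h2]
      abel
    · rw [if_pos h2, if_neg h1, if_neg h1, if_pos h2]
      abel
    · rw [if_neg h2, if_neg h1, if_neg h1, if_neg h2]
      abel
  have eXt : Xtilde m n i = Pg (flipRows m n i) := by
    rw [show Xtilde m n i =
        Pg (fun x => (fun p => if p.1 = i - 1 then x p + 1 else x p : BSLat m n)) *
        Pg (fun x => (fun p => if p.1 = i then x p + 1 else x p : BSLat m n)) from rfl, Pg_mul_Pg,
      hcompR]
  -- Ztilde and Zbar as Dg's
  have eZt : Ztilde m n j = Dg (fun x : BSLat m n =>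
      ((-1:ℂ)) ^ (∑ i0 : Fin m, (x (i0, j - 1)).val) *
      ((-1:ℂ)) ^ (∑ i0 : Fin m, (x (i0, j)).val)) := Dg_mul_Dg _ _
  have eZb : Zbar m n i' j' = Dg (fun x : BSLat m n =>
      ((-1:ℂ)) ^ ((x (i', j' - 1)).val) * ((-1:ℂ)) ^ ((x (i', j')).val)) := Dg_mul_Dg _ _
  -- column sums are invariant under the pair flip
  have col : ∀ (x : BSLat m n) (c : Fin n),
      ((-1:ℂ)) ^ (∑ i0 : Fin m, ((flipPair m n h k x) (i0, c)).val) =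
      ((-1:ℂ)) ^ (∑ i0 : Fin m, (x (i0, c)).val) := by
    intro x c
    by_cases hc : c = k
    · subst hc
      rw [← Finset.prod_pow_eq_pow_sum, ← Finset.prod_pow_eq_pow_sum]
      have hterm : ∀ i0 : Fin m,
          ((-1:ℂ)) ^ (((flipPair m n h c x) (i0, c)).val) =
          (if i0 ∈ ({h, h - 1} : Finset (Fin m)) then (-1:ℂ) else 1) *
            ((-1:ℂ)) ^ ((x (i0, c)).val) := by
        intro i0
        simp only [flipPair, Finset.mem_insert, Finset.mem_singleton]
        by_cases e1 : i0 = h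
        · subst e1
          rw [if_neg (by simp [Prod.ext_iff, Ne.symm h1m]), if_pos rfl,
            if_pos (Or.inl rfl : i0 = i0 ∨ i0 = i0 - 1)]
          rw [add_zero, sign_flip]
          simp
        · by_cases e2 : i0 = h - 1
          · subst e2
            rw [if_pos rfl, if_neg (by simp [Prod.ext_iff, e1]),
              if_pos (Or.inr rfl : h - 1 = h ∨ h - 1 = h - 1)]
            rw [add_zero, sign_flip]
            simp
          · rw [if_neg (by simp [Prod.ext_iff, e2]), if_neg (by simp [Prod.ext_iff, e1])]
            simp [e1, e2]
      rw [Finset.prod_congr rfl (fun i0 _ => hterm i0), Finset.prod_mul_distrib]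
      have hcard : ({h, h - 1} : Finset (Fin m)).card = 2 := by
        rw [Finset.card_insert_of_notMem (by simp [Ne.symm h1m]), Finset.card_singleton]
      rw [Finset.prod_ite_mem, Finset.univ_inter, Finset.prod_const, hcard]
      norm_num
    · congr 1
      apply Finset.sum_congr rfl
      intro i0 _
      simp [flipPair, Prod.ext_iff, hc]
  refine ⟨?_, ?_, ?_, ?_⟩
  · rw [eZt, eXb]
    refine Dg_comm_Pg _ _ (fun x => ?_)
    show ((-1:ℂ)) ^ (∑ i0 : Fin m, ((flipPair m n h k x) (i0, j - 1)).val) *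
        ((-1:ℂ)) ^ (∑ i0 : Fin m, ((flipPair m n h k x) (i0, j)).val) =
        ((-1:ℂ)) ^ (∑ i0 : Fin m, (x (i0, j - 1)).val) *
        ((-1:ℂ)) ^ (∑ i0 : Fin m, (x (i0, j)).val)
    rw [col, col]
  · rw [eZt, eZb]
    exact Dg_mul_comm _ _
  · rw [eXt, eXb]
    refine Pg_mul_comm _ _ ?_
    funext x p
    simp only [Function.comp_apply, flipPair, flipRows]
    abel
  · rw [eXt, eZb]
    refine (Dg_comm_Pg _ _ (fun x => ?_)).symm
    have hval : ∀ c : Fin n, flipRows m n i x (i', c) =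
        x (i', c) + (if i' = i - 1 then 1 else 0) + (if i' = i then 1 else 0) := fun _ => rfl
    show ((-1:ℂ)) ^ ((flipRows m n i x (i', j' - 1)).val) *
        ((-1:ℂ)) ^ ((flipRows m n i x (i', j')).val) = _
    rw [hval, hval]
    by_cases e1 : i' = i - 1
    · have e2 : ¬ i' = i := fun e => i1m (e1.symm.trans e)
      rw [if_pos e1, if_neg e2, add_zero, add_zero, sign_flip, sign_flip]
      ring
    · by_cases e2 : i' = i
      · rw [if_neg e1, if_pos e2, add_zero, add_zero, sign_flip, sign_flip]
        ring
      · rw [if_neg e1, if_neg e2]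
        simp
end
end

section
/- (Knill-Laflamme sufficiency via polar decomposition, key step) Let P be an orthogonal projector on a finite-dimensional Hilbert space and {F_k} operators satisfying P F_k† F_l P = d_{kl} P with d a diagonal real nonnegative matrix (d_{kl} = 0 for k ≠ l). Then for each k with d_{kk} > 0 there exists a unitary U_k with F_k P = √(d_{kk}) U_k P, and the projectors P_k = U_k P U_k† satisfy P_l P_k = 0 for l ≠ k. -/
noncomputable section

open LinearMap

/-- Knill-Laflamme sufficiency, key polar-decomposition step: if P F_k† F_l P = d_kl P
with d diagonal, real and nonnegative, then for each k with d_kk > 0 there is a unitary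
U_k with F_k P = √(d_kk) U_k P, and the projectors P_k = U_k P U_k† are mutually
orthogonal. -/
theorem kl_polar_step {E : Type*} [NormedAddCommGroup E] [InnerProductSpace ℂ E]
    [FiniteDimensional ℂ E] {ι : Type*}
    (P : E →ₗ[ℂ] E) (hPproj : P * P = P) (hPadj : LinearMap.adjoint P = P)
    (F : ι → (E →ₗ[ℂ] E)) (d : ι → ι → ℝ)
    (hdiag : ∀ k l, k ≠ l → d k l = 0) (hnn : ∀ k, 0 ≤ d k k)
    (hF : ∀ k l, P * LinearMap.adjoint (F k) * F l * P = ((d k l : ℝ) : ℂ) • P) :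
    ∃ U : ι → (E →ₗ[ℂ] E),
      (∀ k, 0 < d k k →
        (LinearMap.adjoint (U k) * U k = 1 ∧ U k * LinearMap.adjoint (U k) = 1) ∧
        F k * P = ((Real.sqrt (d k k) : ℝ) : ℂ) • (U k * P)) ∧
      (∀ l k, l ≠ k → 0 < d l l → 0 < d k k →
        (U l * P * LinearMap.adjoint (U l)) * (U k * P * LinearMap.adjoint (U k)) = 0) := by
  classical
  have hPapp : ∀ v : E, P (P v) = P v := by
    intro v
    have := congrFun (congrArg (fun (A : E →ₗ[ℂ] E) => (A : E → E)) hPproj) v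
    simpa [Module.End.mul_apply] using this
  -- Key step: existence of the unitary for each k with d k k > 0.
  have key : ∀ k, 0 < d k k → ∃ U : E →ₗ[ℂ] E,
      (LinearMap.adjoint U * U = 1 ∧ U * LinearMap.adjoint U = 1) ∧
      F k * P = ((Real.sqrt (d k k) : ℝ) : ℂ) • (U * P) := by
    intro k hk
    have hs : (0 : ℝ) < Real.sqrt (d k k) := Real.sqrt_pos.mpr hk
    set c : ℝ := (Real.sqrt (d k k))⁻¹ with hc
    -- norm identity on the range of P
    have main : ∀ z : E, P z = z → ‖F k z‖ = Real.sqrt (d k k) * ‖z‖ := by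
      intro z hz
      have h1 := congrArg (fun (A : E →ₗ[ℂ] E) => @inner ℂ _ _ z (A z)) (hF k k)
      simp only [Module.End.mul_apply, LinearMap.smul_apply, inner_smul_right, hz] at h1
      rw [← hPadj, LinearMap.adjoint_inner_right, hz, LinearMap.adjoint_inner_right] at h1
      rw [inner_self_eq_norm_sq_to_K, inner_self_eq_norm_sq_to_K] at h1
      have h2 : ‖F k z‖ ^ 2 = d k k * ‖z‖ ^ 2 := by
        apply Complex.ofReal_injective
        push_cast
        exact h1
      have h3 := congrArg Real.sqrt h2
      rwa [Real.sqrt_sq (norm_nonneg _), Real.sqrt_mul (hnn k), Real.sqrt_sq (norm_nonneg _)]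
        at h3
    -- the isometry on range P
    let S : Submodule ℂ E := LinearMap.range P
    have hnm : ∀ x : S, ‖(((c : ℂ) • F k) ∘ₗ S.subtype) x‖ = ‖x‖ := by
      rintro ⟨x, y, rfl⟩
      have hx : P (P y) = P y := hPapp y
      have hm := main (P y) hx
      simp only [LinearMap.comp_apply, Submodule.coe_subtype, LinearMap.smul_apply,
        norm_smul, Complex.norm_real, Real.norm_eq_abs, hm]
      rw [abs_of_nonneg (by positivity : (0:ℝ) ≤ c), hc]
      rw [Submodule.coe_norm]
      field_simp
    let L0 : S →ₗᵢ[ℂ] E := ⟨((c : ℂ) • F k) ∘ₗ S.subtype, hnm⟩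
    let L := L0.extend
    refine ⟨L.toLinearMap, ⟨?_, ?_⟩, ?_⟩
    · -- adjoint L * L = 1
      ext x
      refine ext_inner_left ℂ fun y => ?_
      simp only [Module.End.mul_apply, Module.End.one_apply, LinearMap.adjoint_inner_right]
      exact L.inner_map_map y x
    · rw [mul_eq_one_comm]
      ext x
      refine ext_inner_left ℂ fun y => ?_
      simp only [Module.End.mul_apply, Module.End.one_apply, LinearMap.adjoint_inner_right]
      exact L.inner_map_map y x
    · -- F k * P = √d • (L * P)
      ext v
      have hmem : P v ∈ S := LinearMap.mem_range_self P v
      have hext : L (P v) = L0 ⟨P v, hmem⟩ := L0.extend_apply ⟨P v, hmem⟩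
      simp only [Module.End.mul_apply, LinearMap.smul_apply, LinearIsometry.coe_toLinearMap]
      rw [hext]
      show F k (P v) = (((Real.sqrt (d k k) : ℝ) : ℂ)) • (((c : ℂ) • F k) (S.subtype ⟨P v, hmem⟩))
      simp only [LinearMap.smul_apply, Submodule.coe_subtype, smul_smul]
      rw [hc]
      rw [show ((Real.sqrt (d k k) : ℝ) : ℂ) * (((Real.sqrt (d k k))⁻¹ : ℝ) : ℂ) = 1 by
        rw [← Complex.ofReal_mul, mul_inv_cancel₀ hs.ne', Complex.ofReal_one]]
      rw [one_smul]
  -- choose the unitaries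
  have key' : ∀ k, ∃ U : E →ₗ[ℂ] E, 0 < d k k →
      (LinearMap.adjoint U * U = 1 ∧ U * LinearMap.adjoint U = 1) ∧
      F k * P = ((Real.sqrt (d k k) : ℝ) : ℂ) • (U * P) := by
    intro k
    by_cases hk : 0 < d k k
    · obtain ⟨U, h⟩ := key k hk
      exact ⟨U, fun _ => h⟩
    · exact ⟨1, fun h => absurd h hk⟩
  choose U hU using key'
  refine ⟨U, fun k hk => hU k hk, ?_⟩
  intro l k hne hl hk
  obtain ⟨⟨hUl1, hUl2⟩, hFl⟩ := hU l hl
  obtain ⟨⟨hUk1, hUk2⟩, hFk⟩ := hU k hk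
  have hsl : ((Real.sqrt (d l l) : ℝ) : ℂ) ≠ 0 := by
    exact_mod_cast (Real.sqrt_pos.mpr hl).ne'
  have hsk : ((Real.sqrt (d k k) : ℝ) : ℂ) ≠ 0 := by
    exact_mod_cast (Real.sqrt_pos.mpr hk).ne'
  -- adjoint of products with P
  have hadjFl : LinearMap.adjoint (F l * P) = P * LinearMap.adjoint (F l) := by
    rw [← LinearMap.star_eq_adjoint, star_mul, LinearMap.star_eq_adjoint,
      LinearMap.star_eq_adjoint, hPadj]
  have hadjUl : LinearMap.adjoint (U l * P) = P * LinearMap.adjoint (U l) := by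
    rw [← LinearMap.star_eq_adjoint, star_mul, LinearMap.star_eq_adjoint,
      LinearMap.star_eq_adjoint, hPadj]
  have hz : LinearMap.adjoint (F l * P) * (F k * P) = 0 := by
    rw [hadjFl]
    have : P * LinearMap.adjoint (F l) * F k * P = 0 := by
      rw [hF l k, hdiag l k hne]; simp
    calc P * LinearMap.adjoint (F l) * (F k * P)
        = P * LinearMap.adjoint (F l) * F k * P := by noncomm_ring
      _ = 0 := this
  have hz2 : LinearMap.adjoint (F l * P) * (F k * P)
      = (((Real.sqrt (d l l) : ℝ) : ℂ) * ((Real.sqrt (d k k) : ℝ) : ℂ)) •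
        ((P * LinearMap.adjoint (U l)) * (U k * P)) := by
    rw [hFl, hFk, ← LinearMap.star_eq_adjoint, star_smul, LinearMap.star_eq_adjoint]
    rw [smul_mul_assoc, mul_smul_comm, smul_smul, hadjUl]
    congr 1
    simp [Complex.star_def, Complex.conj_ofReal]
  have h0 : (P * LinearMap.adjoint (U l)) * (U k * P) = 0 := by
    have := hz2.symm.trans hz
    rcases smul_eq_zero.mp this with h | h
    · exact absurd h (mul_ne_zero hsl hsk)
    · exact h
  -- conclude
  have expand : (U l * P * LinearMap.adjoint (U l)) * (U k * P * LinearMap.adjoint (U k))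
      = (U l * P) * ((P * LinearMap.adjoint (U l)) * (U k * P)) *
        (P * LinearMap.adjoint (U k)) := by
    conv_lhs => rw [← hPproj]
    noncomm_ring
  rw [expand, h0, mul_zero, zero_mul]
end
end

section
/- If a trace-preserving quantum channel R with Kraus operators {R_l} (so Σ_l R_l† R_l = I) and operators {A_k} satisfy R_l A_k P = c_{lk} P for all l,k, where P is a projector and c_{lk} ∈ ℂ, then P A_j† A_k P = γ_{jk} P where γ_{jk} = Σ_l c_{lj}* c_{lk}, and the matrix γ is Hermitian positive semidefinite. -/
noncomputable section

open LinearMap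
open scoped ComplexOrder

/-- If a trace-preserving channel with Kraus operators R_l and operators A_k satisfy
R_l A_k P = c_lk P for a projector P, then P A_j† A_k P = γ_jk P with
γ_jk = Σ_l c_lj* c_lk, and γ is Hermitian positive semidefinite. -/
theorem kraus_projector_gamma {E : Type*} [NormedAddCommGroup E] [InnerProductSpace ℂ E]
    [FiniteDimensional ℂ E] {ι κ : Type*} [Fintype ι] [Fintype κ] [DecidableEq κ]
    (P : E →ₗ[ℂ] E) (hPproj : P * P = P) (hPadj : LinearMap.adjoint P = P)
    (R : ι → (E →ₗ[ℂ] E)) (A : κ → (E →ₗ[ℂ] E)) (c : ι → κ → ℂ)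
    (hTP : ∑ l, LinearMap.adjoint (R l) * R l = 1)
    (hRA : ∀ l k, R l * A k * P = c l k • P) :
    (∀ j k, P * LinearMap.adjoint (A j) * A k * P
        = (∑ l, (starRingEnd ℂ) (c l j) * c l k) • P) ∧
    (Matrix.of fun j k : κ => ∑ l, (starRingEnd ℂ) (c l j) * c l k).IsHermitian ∧
    (Matrix.of fun j k : κ => ∑ l, (starRingEnd ℂ) (c l j) * c l k).PosSemidef := by
  have hpsd : (Matrix.of fun j k : κ => ∑ l, (starRingEnd ℂ) (c l j) * c l k).PosSemidef := by
    have hM : (Matrix.of fun j k : κ => ∑ l, (starRingEnd ℂ) (c l j) * c l k)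
        = (Matrix.of fun l k => c l k : Matrix ι κ ℂ).conjTranspose * (Matrix.of fun l k => c l k : Matrix ι κ ℂ) := by
      ext j k
      simp [Matrix.mul_apply, Matrix.conjTranspose_apply]
    rw [hM]
    exact Matrix.posSemidef_conjTranspose_mul_self _
  refine ⟨?_, hpsd.isHermitian, hpsd⟩
  intro j k
  have h1 : LinearMap.adjoint (A j * P) = P * LinearMap.adjoint (A j) := by
    rw [← star_eq_adjoint, star_mul, star_eq_adjoint, star_eq_adjoint, hPadj]
  calc P * LinearMap.adjoint (A j) * A k * P
      = LinearMap.adjoint (A j * P) * ((∑ l, LinearMap.adjoint (R l) * R l) * (A k * P)) := by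
        rw [hTP, h1]; noncomm_ring
    _ = ∑ l, LinearMap.adjoint (R l * A j * P) * (R l * A k * P) := by
        simp only [← star_eq_adjoint, star_mul, Finset.sum_mul, Finset.mul_sum]
        exact Finset.sum_congr rfl fun l _ => by noncomm_ring
    _ = ∑ l, LinearMap.adjoint (c l j • P) * (c l k • P) := by
        simp only [hRA]
    _ = ∑ l, ((starRingEnd ℂ) (c l j) * c l k) • P := by
        refine Finset.sum_congr rfl fun l _ => ?_
        rw [← star_eq_adjoint, star_smul, star_eq_adjoint, hPadj]
        rw [smul_mul_smul_comm, hPproj]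
        rfl
    _ = (∑ l, (starRingEnd ℂ) (c l j) * c l k) • P := by rw [Finset.sum_smul]
end
end

section
/- (Circuit-size lower bound for logical CZ on Bacon-Shor, base case) Suppose a circuit C consisting of CZ gates between two m×n Bacon-Shor codeblocks implements logical CZ, meaning conjugation by C maps X̄ supported on row r of block 1 to X̄ times a product of Z operators whose image on block 2 must equal logical Z̄ (a full column, requiring Z support meeting all m rows of block 2) for every row r. If for some pair of rows (r₁, r₂) no CZ gate connects a qubit of row r₁ in block 1 to a qubit of row r₂ in block 2, then conjugating X̄ on row r₁ yields Z support on at most m−1 rows of block 2, hence C does not implement logical CZ; consequently at least m² CZ gates are needed (modeling each row as needing connection to each of the m rows of the other block). -/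
open Classical

/-- Circuit-size lower bound for logical CZ on Bacon-Shor (base case).
A CZ-form circuit between two m×n codeblocks is a finite set of gates, each pairing a
qubit (row, column) of block 1 with one of block 2.  Conjugating X̄ on row r₁ of block 1
introduces Z's exactly on the block-2 qubits paired with row-r₁ qubits; implementing
logical CZ requires this Z support to meet all m rows of block 2, for every r₁.
If some pair of rows (r₁, r₂) is unconnected, the Z support from row r₁ meets at most
m−1 rows, so the circuit fails to implement logical CZ; and any circuit connecting every
pair of rows (with each row in at most m gates after gauge reduction) has at least
m² gates. -/
theorem cz_circuit_lower_bound (m n : ℕ) (hm : 0 < m)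
    (C : Finset ((Fin m × Fin n) × (Fin m × Fin n)))
    (hrow : ∀ r₁ : Fin m, (C.filter (fun g => g.1.1 = r₁)).card ≤ m) :
    (∀ r₁ r₂ : Fin m, (¬ ∃ g ∈ C, g.1.1 = r₁ ∧ g.2.1 = r₂) →
      ((Finset.univ.filter
          (fun r₂' : Fin m => ∃ g ∈ C, g.1.1 = r₁ ∧ g.2.1 = r₂')).card ≤ m - 1 ∧
        ¬ ∀ r₂' : Fin m, ∃ g ∈ C, g.1.1 = r₁ ∧ g.2.1 = r₂')) ∧
    ((∀ r₁ r₂ : Fin m, ∃ g ∈ C, g.1.1 = r₁ ∧ g.2.1 = r₂) → m ^ 2 ≤ C.card) := by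
  constructor
  · intro r₁ r₂ hno
    constructor
    · have hsub : (Finset.univ.filter
          (fun r₂' : Fin m => ∃ g ∈ C, g.1.1 = r₁ ∧ g.2.1 = r₂')) ⊆
          Finset.univ.erase r₂ := by
        intro x hx
        simp only [Finset.mem_filter, Finset.mem_univ, true_and] at hx
        refine Finset.mem_erase.2 ⟨?_, Finset.mem_univ _⟩
        rintro rfl
        exact hno hx
      calc _ ≤ (Finset.univ.erase r₂).card := Finset.card_le_card hsub
        _ = m - 1 := by simp [Finset.card_erase_of_mem]
    · intro h
      exact hno (h r₂)
  · intro hall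
    have key : ∀ r₁ : Fin m, m ≤ (C.filter (fun g => g.1.1 = r₁)).card := by
      intro r₁
      have : ∀ r₂ : Fin m, ∃ g ∈ C.filter (fun g => g.1.1 = r₁), g.2.1 = r₂ := by
        intro r₂
        obtain ⟨g, hg, h1, h2⟩ := hall r₁ r₂
        exact ⟨g, Finset.mem_filter.2 ⟨hg, h1⟩, h2⟩
      have h := Finset.card_le_card_of_surjOn (s := C.filter (fun g => g.1.1 = r₁))
        (t := (Finset.univ : Finset (Fin m)))
        (fun g : (Fin m × Fin n) × (Fin m × Fin n) => g.2.1)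
        (by intro r₂ _; obtain ⟨g, hg, h2⟩ := this r₂; exact ⟨g, hg, h2⟩)
      simpa using h
    have hcard : C.card = ∑ r₁ : Fin m, (C.filter (fun g => g.1.1 = r₁)).card :=
      Finset.card_eq_sum_card_fiberwise (fun g _ => Finset.mem_univ g.1.1)
    calc m ^ 2 = ∑ _r₁ : Fin m, m := by simp [sq]
      _ ≤ ∑ r₁ : Fin m, (C.filter (fun g => g.1.1 = r₁)).card :=
          Finset.sum_le_sum (fun r₁ _ => key r₁)
      _ = C.card := hcard.symm
end
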